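/- Consider n cars parking on a circle with n+1 spots under the probabilistic protocol with any parameter p. A preference vector α ∈ [n+1]^n results in all n cars parking within spots 1,...,n of the corresponding one-way street (i.e., α is a parking function) if and only if spot n+1 is left vacant after all n cars park on the circle. -/

import Mathlib

open Finset

/-- One step of the probabilistic parking protocol on a one-way street with `n` spots:
a car with preference `a` parks there if it is empty; otherwise it moves forward
(if `fwd = true`) or backward (if `fwd = false`), parking at the nearest empty spot
in that direction, and fails (`none`) if there is none. -/
def linPark (n : ℕ) (occ : Finset (Fin n)) (a : Fin n) (fwd : Bool) : Option (Fin n) :=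
  if a ∉ occ then some a
  else
    let cand : Finset (Fin n) := Finset.univ.filter fun s => (if fwd then a < s else s < a) ∧ s ∉ occ
    if h : cand.Nonempty then some (if fwd then cand.min' h else cand.max' h) else none

/-- Run the protocol for all `m` cars (in order), given preferences `α` and coin flips `c`;
returns `none` if some car fails to park. -/
def linRun (n m : ℕ) (α : Fin m → Fin n) (c : Fin m → Bool) : Option (Finset (Fin n)) :=
  (List.finRange m).foldl
    (fun st i => st.bind fun occ => (linPark n occ (α i) (c i)).map fun s => insert s occ)
    (some ∅)

/-- All `m` cars manage to park. -/
def linParks (n m : ℕ) (α : Fin m → Fin n) (c : Fin m → Bool) : Prop :=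
  (linRun n m α c).isSome = true

instance (n m : ℕ) (α : Fin m → Fin n) (c : Fin m → Bool) : Decidable (linParks n m α c) := by
  unfold linParks; infer_instance

open Fin.NatCast in
/-- One step of the probabilistic parking protocol on a circle with `n+1` spots:
a car with preference `a` parks there if empty; otherwise it searches clockwise
(if `fwd = true`) or counterclockwise (if `fwd = false`) for the nearest empty spot.
(If all spots are occupied, which never happens with at most `n` cars, it returns `a`.) -/
def circPark (n : ℕ) (occ : Finset (Fin (n + 1))) (a : Fin (n + 1)) (fwd : Bool) :
    Fin (n + 1) :=
  let cand : Finset ℕ :=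
    (Finset.range (n + 1)).filter fun t =>
      (if fwd then a + (t : Fin (n + 1)) else a - (t : Fin (n + 1))) ∉ occ
  if h : cand.Nonempty then
    if fwd then a + ((cand.min' h : ℕ) : Fin (n + 1)) else a - ((cand.min' h : ℕ) : Fin (n + 1))
  else a

/-- Run the circular protocol for all `m` cars in order; returns the occupied set. -/
def circRun (n m : ℕ) (α : Fin m → Fin (n + 1)) (c : Fin m → Bool) : Finset (Fin (n + 1)) :=
  (List.finRange m).foldl (fun occ i => insert (circPark n occ (α i) (c i)) occ) ∅

namespace CircAux

open Fin.NatCast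

lemma val_add (n : ℕ) (a : Fin (n+1)) (t : ℕ) (ht : a.val + t ≤ n) :
    (a + (t : Fin (n+1))).val = a.val + t := by
  rw [Fin.add_def]
  have htlt : t < n + 1 := by omega
  simp [Fin.val_cast_of_lt htlt, Nat.mod_eq_of_lt (by omega : a.val + t < n + 1)]

lemma val_sub (n : ℕ) (a : Fin (n+1)) (t : ℕ) (ht : t ≤ a.val) :
    (a - (t : Fin (n+1))).val = a.val - t := by
  rw [Fin.sub_def]
  have htlt : t < n + 1 := by omega
  have h2 : a.val < n + 1 := a.isLt
  simp only [Fin.val_cast_of_lt htlt]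
  have : (n + 1 - t + a.val) = (a.val - t) + (n + 1) := by omega
  rw [this, Nat.add_mod_right, Nat.mod_eq_of_lt (by omega)]

lemma add_last (n : ℕ) (a : Fin (n+1)) :
    a + ((n - a.val : ℕ) : Fin (n+1)) = Fin.last n := by
  apply Fin.ext
  rw [val_add n a _ (by omega)]
  have := a.isLt
  simp [Fin.last]; omega

lemma sub_last (n : ℕ) (a : Fin (n+1)) (ha : a.val < n) :
    a - ((a.val + 1 : ℕ) : Fin (n+1)) = Fin.last n := by
  apply Fin.ext
  rw [Fin.sub_def]
  have htlt : a.val + 1 < n + 1 := by omega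
  simp only [Fin.val_cast_of_lt htlt]
  have : (n + 1 - (a.val + 1) + a.val) = n := by omega
  rw [this, Nat.mod_eq_of_lt (by omega)]
  simp [Fin.last]

def emb (n : ℕ) : Fin n ↪ Fin (n+1) := ⟨Fin.castSucc, Fin.castSucc_injective n⟩

lemma last_not_mem_map (n : ℕ) (occL : Finset (Fin n)) :
    Fin.last n ∉ occL.map (emb n) := by
  simp only [Finset.mem_map, emb, Function.Embedding.coeFn_mk]
  rintro ⟨s, -, hs⟩
  exact absurd hs (Fin.castSucc_lt_last s).ne

lemma mem_map_iff (n : ℕ) (occL : Finset (Fin n)) (s : Fin n) :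
    s.castSucc ∈ occL.map (emb n) ↔ s ∈ occL := by
  simp [emb, Fin.castSucc_injective n |>.eq_iff]

lemma circPark_not_mem (n : ℕ) (occ : Finset (Fin (n+1))) (a : Fin (n+1)) (fwd : Bool)
    (ha : a ∉ occ) : circPark n occ a fwd = a := by
  unfold circPark
  set cand : Finset ℕ :=
    (Finset.range (n + 1)).filter fun t =>
      (if fwd then a + (t : Fin (n + 1)) else a - (t : Fin (n + 1))) ∉ occ with hcand
  have h0 : 0 ∈ cand := by
    simp only [hcand, Finset.mem_filter, Finset.mem_range]
    refine ⟨by omega, ?_⟩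
    cases fwd <;> simpa
  have hne : cand.Nonempty := ⟨0, h0⟩
  have hmin : cand.min' hne = 0 :=
    Nat.le_antisymm (Finset.min'_le _ _ h0) (Nat.zero_le _)
  rw [dif_pos hne, hmin]
  cases fwd <;> simp

lemma step (n : ℕ) (occL : Finset (Fin n)) (a : Fin (n+1)) (ha : (a : ℕ) < n) (fwd : Bool) :
    circPark n (occL.map (emb n)) a fwd =
      ((linPark n occL ⟨(a : ℕ), ha⟩ fwd).map Fin.castSucc).getD (Fin.last n) := by
  set a' : Fin n := ⟨(a : ℕ), ha⟩ with ha'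
  have hcast : a'.castSucc = a := by apply Fin.ext; simp [ha']
  set occ := occL.map (emb n) with hocc
  have hmem : a ∈ occ ↔ a' ∈ occL := by rw [← hcast]; exact mem_map_iff n occL a'
  by_cases hm : a' ∈ occL
  case neg =>
    rw [circPark_not_mem n occ a fwd (by rw [hmem]; exact hm)]
    rw [linPark, if_pos hm]
    simp [hcast]
  case pos =>
    have hain : a ∈ occ := hmem.mpr hm
    -- circ side
    unfold circPark
    set cand : Finset ℕ :=
      (Finset.range (n + 1)).filter fun t =>
        (if fwd then a + (t : Fin (n + 1)) else a - (t : Fin (n + 1))) ∉ occ with hcand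
    have hcand_mem : ∀ t, t ∈ cand ↔ t < n + 1 ∧
        (if fwd then a + (t : Fin (n + 1)) else a - (t : Fin (n + 1))) ∉ occ := by
      intro t; simp [hcand]
    set t0 : ℕ := if fwd then n - a.val else a.val + 1 with ht0
    have hlast_eq : (if fwd then a + ((t0 : ℕ) : Fin (n+1)) else a - ((t0 : ℕ) : Fin (n+1))) = Fin.last n := by
      cases fwd <;> simp only [ht0, if_true, if_false, Bool.false_eq_true]
      · exact sub_last n a ha
      · exact add_last n a
    have ht0mem : t0 ∈ cand := by
      rw [hcand_mem]
      constructor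
      · cases fwd <;> simp [ht0] <;> omega
      · rw [hlast_eq]; exact last_not_mem_map n occL
    have hne : cand.Nonempty := ⟨t0, ht0mem⟩
    rw [dif_pos hne]
    set t := cand.min' hne with htdef
    have htmem : t ∈ cand := Finset.min'_mem _ _
    have ht_le : t ≤ t0 := Finset.min'_le _ _ ht0mem
    have ht_pos : 1 ≤ t := by
      by_contra h
      have h0 : t = 0 := by omega
      have := (hcand_mem t).mp htmem
      rw [h0] at this
      have := this.2
      cases fwd <;> simp at this <;> exact this hain
    -- lin side
    rw [linPark, if_neg (not_not_intro hm)]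
    set candL : Finset (Fin n) :=
      Finset.univ.filter fun s => (if fwd then a' < s else s < a') ∧ s ∉ occL with hcandL
    have hcandL_mem : ∀ s, s ∈ candL ↔ (if fwd then a' < s else s < a') ∧ s ∉ occL := by
      intro s; simp [hcandL]
    by_cases hLne : candL.Nonempty
    case pos =>
      rw [dif_pos hLne]
      set s : Fin n := if fwd then candL.min' hLne else candL.max' hLne with hs
      have hsmem : s ∈ candL := by
        cases fwd <;> simp only [hs, if_true, if_false, Bool.false_eq_true]
        exacts [Finset.max'_mem _ _, Finset.min'_mem _ _]
      have hsrel : (if fwd then a' < s else s < a') ∧ s ∉ occL := (hcandL_mem s).mp hsmem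
      set ts : ℕ := if fwd then s.val - a.val else a.val - s.val with hts
      have hsval : (if fwd then a + ((ts:ℕ) : Fin (n+1)) else a - ((ts:ℕ) : Fin (n+1))) = s.castSucc := by
        cases hf : fwd <;> simp only [hts, hf, if_true, if_false, Bool.false_eq_true] <;>
          apply Fin.ext
        · rw [val_sub n a _ (by omega)]
          have : s.val < a.val := by have := hsrel.1; rw [hf] at this; simpa [Fin.lt_def, ha'] using this
          simp [Fin.castSucc]; omega
        · rw [val_add n a _ ?_]
          · have : a.val < s.val := by have := hsrel.1; rw [hf] at this; simpa [Fin.lt_def, ha'] using this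
            simp [Fin.castSucc]; omega
          · have := s.isLt; omega
      have htsmem : ts ∈ cand := by
        rw [hcand_mem]
        refine ⟨?_, ?_⟩
        · have := s.isLt; cases fwd <;> simp [hts] <;> omega
        · rw [hsval, mem_map_iff]; exact hsrel.2
      have ht_le_ts : t ≤ ts := Finset.min'_le _ _ htsmem
      -- now show ts ≤ t via extremality of s
      have hts_le : ts ≤ t := by
        have hrel : (if fwd then a' < s else s < a') := hsrel.1
        cases hf : fwd
        · -- backward: u = a.val - t, show u ≤ s i.e. s = max'
          have hslt : s.val < a.val := by rw [hf] at hrel; simpa [Fin.lt_def, ha'] using hrel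
          have hta : t ≤ a.val := by
            have : ts = a.val - s.val := by simp [hts, hf]
            omega
          have hu_lt : a.val - t < n := by omega
          set u : Fin n := ⟨a.val - t, hu_lt⟩ with hu
          have huval : a - ((t:ℕ) : Fin (n+1)) = u.castSucc := by
            apply Fin.ext; rw [val_sub n a _ hta]; simp [hu, Fin.castSucc]
          have hucand : u ∈ candL := by
            rw [hcandL_mem, hf]
            refine ⟨by simp only [Bool.false_eq_true, if_false, Fin.lt_iff_val_lt_val, hu, ha']; omega, ?_⟩
            have := (hcand_mem t).mp htmem
            rw [hf] at this
            simp only [if_false, Bool.false_eq_true] at this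
            rw [huval] at this
            rw [← mem_map_iff n occL u]; exact this.2
          have : u ≤ candL.max' hLne := Finset.le_max' _ _ hucand
          have hus : u.val ≤ s.val := by
            have hseq : s = candL.max' hLne := by simp [hs, hf]
            rw [hseq]; exact this
          simp only [hu] at hus
          have : ts = a.val - s.val := by simp [hts, hf]
          omega
        · -- forward
          have hslt : a.val < s.val := by rw [hf] at hrel; simpa [Fin.lt_def, ha'] using hrel
          have htn : a.val + t ≤ n := by
            have ht0' : t0 = n - a.val := by simp [ht0, hf]
            omega
          have hu_lt : a.val + t < n := by
            have : ts = s.val - a.val := by simp [hts, hf]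
            have := s.isLt
            omega
          set u : Fin n := ⟨a.val + t, hu_lt⟩ with hu
          have huval : a + ((t:ℕ) : Fin (n+1)) = u.castSucc := by
            apply Fin.ext; rw [val_add n a _ htn]; simp [hu, Fin.castSucc]
          have hucand : u ∈ candL := by
            rw [hcandL_mem, hf]
            refine ⟨by simp [Fin.lt_def, hu, ha']; omega, ?_⟩
            have := (hcand_mem t).mp htmem
            rw [hf] at this
            simp only [if_true] at this
            rw [huval] at this
            rw [← mem_map_iff n occL u]; exact this.2
          have hsu : candL.min' hLne ≤ u := Finset.min'_le _ _ hucand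
          have hus : s.val ≤ u.val := by
            have hseq : s = candL.min' hLne := by simp [hs, hf]
            rw [hseq]; exact hsu
          simp only [hu] at hus
          have : ts = s.val - a.val := by simp [hts, hf]
          omega
      have hteq : t = ts := le_antisymm ht_le_ts hts_le
      rw [← htdef] at *
      rw [hteq, hsval]
      cases fwd <;> simp
    case neg =>
      rw [dif_neg hLne]
      simp only [Option.map_none, Option.getD_none]
      -- show t = t0
      have ht_ge : t0 ≤ t := by
        by_contra hlt
        push_neg at hlt
        cases hf : fwd
        · -- backward: t < a.val + 1 so t ≤ a.val
          have ht0' : t0 = a.val + 1 := by simp [ht0, hf]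
          have hta : t ≤ a.val := by omega
          have hu_lt : a.val - t < n := by omega
          set u : Fin n := ⟨a.val - t, hu_lt⟩ with hu
          have huval : a - ((t:ℕ) : Fin (n+1)) = u.castSucc := by
            apply Fin.ext; rw [val_sub n a _ hta]; simp [hu, Fin.castSucc]
          have hucand : u ∈ candL := by
            rw [hcandL_mem, hf]
            refine ⟨by simp only [Bool.false_eq_true, if_false, Fin.lt_iff_val_lt_val, hu, ha']; omega, ?_⟩
            have := (hcand_mem t).mp htmem
            rw [hf] at this
            simp only [if_false, Bool.false_eq_true] at this
            rw [huval] at this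
            rw [← mem_map_iff n occL u]; exact this.2
          exact hLne ⟨u, hucand⟩
        · have ht0' : t0 = n - a.val := by simp [ht0, hf]
          have hu_lt : a.val + t < n := by omega
          set u : Fin n := ⟨a.val + t, hu_lt⟩ with hu
          have huval : a + ((t:ℕ) : Fin (n+1)) = u.castSucc := by
            apply Fin.ext; rw [val_add n a _ (by omega)]; simp [hu, Fin.castSucc]
          have hucand : u ∈ candL := by
            rw [hcandL_mem, hf]
            refine ⟨by simp [Fin.lt_def, hu, ha']; omega, ?_⟩
            have := (hcand_mem t).mp htmem
            rw [hf] at this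
            simp only [if_true] at this
            rw [huval] at this
            rw [← mem_map_iff n occL u]; exact this.2
          exact hLne ⟨u, hucand⟩
      have hteq : t = t0 := le_antisymm ht_le ht_ge
      rw [← htdef] at *
      rw [hteq]
      exact hlast_eq

end CircAux

namespace CircAux

lemma lin_foldl_none (n m : ℕ) (β : Fin m → Fin n) (c : Fin m → Bool) (l : List (Fin m)) :
    l.foldl (fun st i => st.bind fun occ => (linPark n occ (β i) (c i)).map fun s => insert s occ)
      none = none := by
  induction l with
  | nil => rfl
  | cons i l ih => simpa using ih

lemma circ_mono (n m : ℕ) (α : Fin m → Fin (n+1)) (c : Fin m → Bool) (l : List (Fin m))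
    (occ : Finset (Fin (n+1))) :
    occ ⊆ l.foldl (fun occ i => insert (circPark n occ (α i) (c i)) occ) occ := by
  induction l generalizing occ with
  | nil => exact Finset.Subset.refl _
  | cons i l ih =>
    exact (Finset.subset_insert _ _).trans (ih _)

lemma run_fwd (n m : ℕ) (β : Fin m → Fin n) (c : Fin m → Bool) (l : List (Fin m))
    (occL R : Finset (Fin n))
    (h : l.foldl (fun st i => st.bind fun occ => (linPark n occ (β i) (c i)).map fun s => insert s occ)
        (some occL) = some R) :
    l.foldl (fun occ i => insert (circPark n occ ((β i).castSucc) (c i)) occ)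
        (occL.map (emb n)) = R.map (emb n) := by
  induction l generalizing occL with
  | nil =>
    simp only [List.foldl_nil, Option.some.injEq] at h
    rw [h, List.foldl_nil]
  | cons i l ih =>
    rw [List.foldl_cons] at h ⊢
    cases hp : linPark n occL (β i) (c i) with
    | none =>
      rw [show (some occL).bind (fun occ => (linPark n occ (β i) (c i)).map fun s => insert s occ)
          = none by simp [hp], lin_foldl_none] at h
      exact absurd h (by simp)
    | some s =>
      have hb : (β i : ℕ) < n := (β i).isLt
      have hcast : (⟨((β i).castSucc : ℕ), by simpa using hb⟩ : Fin n) = β i := by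
        apply Fin.ext; simp
      have hx : circPark n (occL.map (emb n)) ((β i).castSucc) (c i) = s.castSucc := by
        rw [step n occL ((β i).castSucc) (by simpa using hb) (c i), hcast, hp]
        rfl
      rw [show (some occL).bind (fun occ => (linPark n occ (β i) (c i)).map fun s => insert s occ)
          = some (insert s occL) by simp [hp]] at h
      rw [hx, show insert s.castSucc (occL.map (emb n)) = (insert s occL).map (emb n) by
        rw [Finset.map_insert]; rfl]
      exact ih _ h

lemma run_bwd (n m : ℕ) (α : Fin m → Fin (n+1)) (c : Fin m → Bool) (l : List (Fin m))
    (occL : Finset (Fin n))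
    (h : Fin.last n ∉ l.foldl (fun occ i => insert (circPark n occ (α i) (c i)) occ)
        (occL.map (emb n))) :
    (∀ i ∈ l, (α i : ℕ) < n) ∧
      ∀ β : Fin m → Fin n, (∀ i ∈ l, (β i).castSucc = α i) →
        (l.foldl (fun st i => st.bind fun occ =>
            (linPark n occ (β i) (c i)).map fun s => insert s occ) (some occL)).isSome := by
  induction l generalizing occL with
  | nil => exact ⟨by simp, fun β _ => rfl⟩
  | cons i l ih =>
    rw [List.foldl_cons] at h
    set x := circPark n (occL.map (emb n)) (α i) (c i) with hx
    have hx_ne : x ≠ Fin.last n := by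
      intro hxe
      apply h
      apply circ_mono
      rw [← hxe]
      exact Finset.mem_insert_self _ _
    have hai : (α i : ℕ) < n := by
      by_contra hge
      have : α i = Fin.last n := by
        apply Fin.ext; have := (α i).isLt; simp [Fin.last]; omega
      apply hx_ne
      rw [hx, this, circPark_not_mem n _ _ _ (last_not_mem_map n occL)]
    have hstep := step n occL (α i) hai (c i)
    cases hp : linPark n occL ⟨(α i : ℕ), hai⟩ (c i) with
    | none =>
      exact absurd (by rw [hx, hstep, hp]; rfl) hx_ne
    | some s =>
      have hxs : x = s.castSucc := by rw [hx, hstep, hp]; rfl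
      have hocc1 : insert x (occL.map (emb n)) = (insert s occL).map (emb n) := by
        rw [hxs, Finset.map_insert]; rfl
      rw [hocc1] at h
      obtain ⟨h1, h2⟩ := ih _ h
      refine ⟨?_, ?_⟩
      · intro j hj
        rcases List.mem_cons.mp hj with hj | hj
        · rw [hj]; exact hai
        · exact h1 j hj
      · intro β hβ
        have hβi : β i = ⟨(α i : ℕ), hai⟩ := by
          apply Fin.ext
          have := hβ i List.mem_cons_self
          simpa using congrArg Fin.val this
        rw [List.foldl_cons,
          show (some occL).bind (fun occ => (linPark n occ (β i) (c i)).map fun s => insert s occ)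
            = some (insert s occL) by simp [hβi, hp]]
        exact h2 β fun j hj => hβ j (List.mem_cons_of_mem i hj)

end CircAux


/-- **Lemma (α ∈ PF_n ↔ α ∈ S_{n+1}).** For any fixed realization of coin flips `c`,
a preference vector `α ∈ [n+1]^n` of `n` cars parking on a circle with `n+1` spots
leaves spot `n+1` vacant if and only if all preferences lie in `[n]` and the same cars
with the same coin flips all park on the one-way street with `n` spots, i.e. `α` is a
parking function. -/
theorem circ_vacant_iff_parking (n : ℕ) (α : Fin n → Fin (n + 1)) (c : Fin n → Bool) :
    Fin.last n ∉ circRun n n α c ↔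
      ∃ h : ∀ i, (α i : ℕ) < n, linParks n n (fun i => ⟨(α i : ℕ), h i⟩) c := by
  have hempty : (∅ : Finset (Fin (n+1))) = (∅ : Finset (Fin n)).map (CircAux.emb n) := by
    simp
  constructor
  · intro h
    rw [circRun, hempty] at h
    obtain ⟨h1, h2⟩ := CircAux.run_bwd n n α c (List.finRange n) ∅ h
    have hlt : ∀ i, (α i : ℕ) < n := fun i => h1 i (List.mem_finRange i)
    refine ⟨hlt, ?_⟩
    exact h2 (fun i => ⟨(α i : ℕ), hlt i⟩) fun i _ => by apply Fin.ext; simp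
  · rintro ⟨h, hp⟩
    rw [linParks, Option.isSome_iff_exists] at hp
    obtain ⟨R, hR⟩ := hp
    set β : Fin n → Fin n := fun i => ⟨(α i : ℕ), h i⟩ with hβ
    have hαeq : α = fun i => (β i).castSucc := by
      funext i; apply Fin.ext; simp [hβ]
    rw [circRun, hempty, hαeq]
    rw [CircAux.run_fwd n n β c (List.finRange n) ∅ R hR]
    exact CircAux.last_not_mem_map n R
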